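/- Let C be a shortest even hole of a graph G with ||C|| ≥ 24, and let u, v be vertices of C with d_C(u,v) ≤ ||C||/4 − 1. If G contains no C-bad path, then d_G(u,v) = d_C(u,v). -/

import Mathlib

open SimpleGraph

variable {V : Type*}

def IsHole (G : SimpleGraph V) {v : V} (C : G.Walk v v) : Prop :=
  C.IsCycle ∧ 4 ≤ C.length ∧
    ∀ x y : V, x ∈ C.support → y ∈ C.support → G.Adj x y → s(x, y) ∈ C.edges

def IsShortestEvenHole (G : SimpleGraph V) {v : V} (C : G.Walk v v) : Prop :=
  IsHole G C ∧ Even C.length ∧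
    ∀ (w : V) (D : G.Walk w w), IsHole G D → Even D.length → C.length ≤ D.length

/-- Distance between `a` and `b` inside the cycle `C`: the least length of a path of `C`
between them. -/
noncomputable def cycleDist (G : SimpleGraph V) {v : V} (C : G.Walk v v) (a b : V) : ℕ :=
  sInf {n | ∃ P : G.Walk a b, P.IsPath ∧ (∀ e ∈ P.edges, e ∈ C.edges) ∧ P.length = n}

/-- `P` is a `C`-bad path for the shortest even hole `C`. -/
def IsCBad (G : SimpleGraph V) {w u v : V} (C : G.Walk w w) (P : G.Walk u v) : Prop :=
  u ≠ v ∧ ¬ G.Adj u v ∧ u ∈ C.support ∧ v ∈ C.support ∧ P.IsPath ∧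
  2 ≤ P.length ∧ P.length ≤ cycleDist G C u v ∧ 4 * P.length < C.length ∧
  ∀ Q : G.Walk u v, Q.IsPath → (∀ e ∈ Q.edges, e ∈ C.edges) →
    ¬ ∃ D : G.Walk u u, IsShortestEvenHole G D ∧
        {z | z ∈ D.support} = {z | z ∈ P.support} ∪ {z | z ∈ Q.support}

section CBadAuxSec

variable {G : SimpleGraph V} {u v a b : V}

namespace CBadAux

lemma getVert_eq_support_getElem (p : G.Walk a b) {i : ℕ} (h : i ≤ p.length) :
    p.getVert i = p.support[i]'(by rw [SimpleGraph.Walk.length_support]; omega) := by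
  induction p generalizing i with
  | nil => simp at h; subst h; simp
  | cons hadj q ih =>
    cases i with
    | zero => simp
    | succ n =>
      rw [SimpleGraph.Walk.getVert_cons_succ, ih (by simpa using h)]
      simp [SimpleGraph.Walk.support_cons]

/-- getVert is injective on `[0, length]` for walks with nodup support. -/
lemma path_getVert_inj {p : G.Walk a b} (hp : p.support.Nodup) {i j : ℕ}
    (hi : i ≤ p.length) (hj : j ≤ p.length) (h : p.getVert i = p.getVert j) : i = j := by
  rw [getVert_eq_support_getElem p hi, getVert_eq_support_getElem p hj] at h
  exact (List.Nodup.getElem_inj_iff hp).mp h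

/-- getVert is injective on `[1, length]` for closed walks whose support tail is nodup. -/
lemma cycle_getVert_inj {p : G.Walk a a} (hp : p.support.tail.Nodup) {i j : ℕ}
    (hi1 : 1 ≤ i) (hi : i ≤ p.length) (hj1 : 1 ≤ j) (hj : j ≤ p.length)
    (h : p.getVert i = p.getVert j) : i = j := by
  have hlen : p.support.tail.length = p.length := by
    rw [List.length_tail, SimpleGraph.Walk.length_support]; omega
  have e1 : p.getVert i = p.support.tail[i-1]'(by omega) := by
    rw [getVert_eq_support_getElem p hi]
    rw [List.getElem_tail]
    congr 1
    omega
  have e2 : p.getVert j = p.support.tail[j-1]'(by omega) := by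
    rw [getVert_eq_support_getElem p hj]
    rw [List.getElem_tail]
    congr 1
    omega
  rw [e1, e2] at h
  have := (List.Nodup.getElem_inj_iff hp).mp h
  omega

end CBadAux

namespace CBadAux

lemma edge_getVert_mem (p : G.Walk a b) {i : ℕ} (hi : i < p.length) :
    s(p.getVert i, p.getVert (i+1)) ∈ p.edges := by
  have := SimpleGraph.Walk.toSubgraph_adj_getVert p hi
  rwa [← SimpleGraph.Subgraph.mem_edgeSet, SimpleGraph.Walk.mem_edges_toSubgraph] at this

/-- In a closed walk with injective getVert on [1, length], edges incident to an internal
vertex `getVert i` go to `getVert (i-1)` or `getVert (i+1)`. -/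
lemma neighbor_of_mem_edges {W : G.Walk u u}
    (Hinj : ∀ i j : ℕ, 1 ≤ i → i ≤ W.length → 1 ≤ j → j ≤ W.length →
      W.getVert i = W.getVert j → i = j)
    {i : ℕ} (hi1 : 1 ≤ i) (hi : i < W.length) {y : V}
    (h : s(W.getVert i, y) ∈ W.edges) :
    y = W.getVert (i-1) ∨ y = W.getVert (i+1) := by
  have hadj : W.toSubgraph.Adj (W.getVert i) y := by
    rw [← SimpleGraph.Subgraph.mem_edgeSet, SimpleGraph.Walk.mem_edges_toSubgraph]; exact h
  obtain ⟨k, hk, hklt⟩ := (SimpleGraph.Walk.toSubgraph_adj_iff W).mp hadj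
  rw [Sym2.eq_iff] at hk
  rcases hk with ⟨h1, h2⟩ | ⟨h1, h2⟩
  · -- W_k = W_i, W_{k+1} = y
    rcases Nat.eq_zero_or_pos k with rfl | hk1
    · exfalso
      have h1' : W.getVert W.length = W.getVert i := by
        rw [SimpleGraph.Walk.getVert_length]; simpa using h1
      have := Hinj W.length i (by omega) le_rfl hi1 (by omega) h1'
      omega
    · have := Hinj k i hk1 (by omega) hi1 (by omega) h1
      subst this
      right; exact h2.symm
  · -- W_k = y, W_{k+1} = W_i
    have := Hinj (k+1) i (by omega) (by omega) hi1 (by omega) h2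
    have hk' : k = i - 1 := by omega
    subst hk'
    left; exact h1.symm

lemma neighbor_of_mem_edges_zero {W : G.Walk u u}
    (Hinj : ∀ i j : ℕ, 1 ≤ i → i ≤ W.length → 1 ≤ j → j ≤ W.length →
      W.getVert i = W.getVert j → i = j)
    (hn : 1 ≤ W.length) {y : V}
    (h : s(u, y) ∈ W.edges) :
    y = W.getVert 1 ∨ y = W.getVert (W.length - 1) := by
  have hadj : W.toSubgraph.Adj u y := by
    rw [← SimpleGraph.Subgraph.mem_edgeSet, SimpleGraph.Walk.mem_edges_toSubgraph]; exact h
  obtain ⟨k, hk, hklt⟩ := (SimpleGraph.Walk.toSubgraph_adj_iff W).mp hadj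
  rw [Sym2.eq_iff] at hk
  rcases hk with ⟨h1, h2⟩ | ⟨h1, h2⟩
  · rcases Nat.eq_zero_or_pos k with rfl | hk1
    · left; rw [← h2]
    · exfalso
      have h1' : W.getVert k = W.getVert W.length := by
        rw [SimpleGraph.Walk.getVert_length]; exact h1
      have := Hinj k W.length hk1 (by omega) (by omega) le_rfl h1'
      omega
  · -- W_{k+1} = u = W_len
    have h2' : W.getVert (k+1) = W.getVert W.length := by
      rw [SimpleGraph.Walk.getVert_length]; exact h2
    have := Hinj (k+1) W.length (by omega) (by omega) (by omega) le_rfl h2'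
    right
    rw [← h1]
    congr 1
    omega

end CBadAux

namespace CBadAux

lemma key_follow {W : G.Walk u u}
    (Hinj : ∀ i j : ℕ, 1 ≤ i → i ≤ W.length → 1 ≤ j → j ≤ W.length →
      W.getVert i = W.getVert j → i = j)
    {Q : G.Walk u v} (hQ : Q.support.Nodup) (hQn : Q.length ≤ W.length)
    (hsub : ∀ e ∈ Q.edges, e ∈ W.edges) (h1 : Q.getVert 1 = W.getVert 1) :
    ∀ i, i ≤ Q.length → Q.getVert i = W.getVert i := by
  intro i
  induction i using Nat.strong_induction_on with
  | _ i ih =>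
    match i with
    | 0 => intro _; simp
    | 1 => intro _; exact h1
    | (k+2) =>
      intro hik
      have hk1 : Q.getVert (k+1) = W.getVert (k+1) := ih (k+1) (by omega) (by omega)
      have hk0 : Q.getVert k = W.getVert k := ih k (by omega) (by omega)
      have he : s(W.getVert (k+1), Q.getVert (k+2)) ∈ W.edges := by
        rw [← hk1]
        exact hsub _ (edge_getVert_mem Q (by omega))
      have := neighbor_of_mem_edges Hinj (by omega) (by omega) he
      rcases this with h | h
      · exfalso
        have : Q.getVert (k+2) = Q.getVert k := by
          rw [h, hk0]; norm_num
        have := path_getVert_inj hQ (by omega : k+2 ≤ Q.length) (by omega) this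
        omega
      · simpa using h

/-- Classification: any path from `u` along the edges of a closed walk `W` (with the
injectivity property of a cycle) reaches `v` at an index `j`, being one of the two arcs. -/
lemma classify {W : G.Walk u u}
    (Hinj : ∀ i j : ℕ, 1 ≤ i → i ≤ W.length → 1 ≤ j → j ≤ W.length →
      W.getVert i = W.getVert j → i = j)
    (hn3 : 3 ≤ W.length)
    {Q : G.Walk u v} (hQ : Q.IsPath) (hne : u ≠ v)
    (hsub : ∀ e ∈ Q.edges, e ∈ W.edges) :
    ∃ j, 1 ≤ j ∧ j < W.length ∧ W.getVert j = v ∧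
      (Q.length = j ∨ Q.length + j = W.length) := by
  have hQ1 : 1 ≤ Q.length := by
    by_contra hcon
    have h0 : Q.length = 0 := by omega
    have hvv := Q.getVert_length
    rw [h0, SimpleGraph.Walk.getVert_zero] at hvv
    exact hne hvv
  have hQn : Q.length ≤ W.length := by
    have hnd : Q.edges.Nodup := hQ.isTrail.edges_nodup
    have hsub' : Q.edges ⊆ W.edges := fun e he => hsub e he
    have := (hnd.subperm hsub').length_le
    simpa [SimpleGraph.Walk.length_edges] using this
  -- first edge of Q
  have hfe : s(u, Q.getVert 1) ∈ W.edges := by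
    have := edge_getVert_mem Q (by omega : 0 < Q.length)
    simp only [SimpleGraph.Walk.getVert_zero] at this
    exact hsub _ this
  -- reverse-related injectivity
  have HinjR : ∀ i j : ℕ, 1 ≤ i → i ≤ W.reverse.length → 1 ≤ j → j ≤ W.reverse.length →
      W.reverse.getVert i = W.reverse.getVert j → i = j := by
    intro i j hi1 hi hj1 hj h
    rw [SimpleGraph.Walk.length_reverse] at hi hj
    rw [SimpleGraph.Walk.getVert_reverse, SimpleGraph.Walk.getVert_reverse] at h
    set a := W.length - i with ha
    set b := W.length - j with hb
    rcases Nat.eq_zero_or_pos a with ha0 | ha1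
    · rcases Nat.eq_zero_or_pos b with hb0 | hb1
      · omega
      · exfalso
        have : W.getVert b = W.getVert W.length := by
          rw [SimpleGraph.Walk.getVert_length, ← h, ha0, SimpleGraph.Walk.getVert_zero]
        have := Hinj b W.length hb1 (by omega) (by omega) le_rfl this
        omega
    · rcases Nat.eq_zero_or_pos b with hb0 | hb1
      · exfalso
        have : W.getVert a = W.getVert W.length := by
          rw [SimpleGraph.Walk.getVert_length, h, hb0, SimpleGraph.Walk.getVert_zero]
        have := Hinj a W.length ha1 (by omega) (by omega) le_rfl this
        omega
      · have := Hinj a b ha1 (by omega) hb1 (by omega) h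
        omega
  rcases neighbor_of_mem_edges_zero Hinj (by omega) hfe with h1 | h1
  · -- Q follows W forwards
    have hall := key_follow Hinj hQ.support_nodup hQn hsub h1
    have hv' : W.getVert Q.length = v := by
      rw [← hall Q.length le_rfl, SimpleGraph.Walk.getVert_length]
    refine ⟨Q.length, hQ1, ?_, hv', Or.inl rfl⟩
    rcases Nat.lt_or_ge Q.length W.length with h | h
    · exact h
    · exfalso
      have hQW : Q.length = W.length := by omega
      rw [hQW, SimpleGraph.Walk.getVert_length] at hv'
      exact hne hv'
  · -- Q follows W backwards
    have hsubR : ∀ e ∈ Q.edges, e ∈ W.reverse.edges := by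
      intro e he
      rw [SimpleGraph.Walk.edges_reverse, List.mem_reverse]
      exact hsub e he
    have h1R : Q.getVert 1 = W.reverse.getVert 1 := by
      rw [SimpleGraph.Walk.getVert_reverse]; exact h1
    have hQnR : Q.length ≤ W.reverse.length := by
      rw [SimpleGraph.Walk.length_reverse]; exact hQn
    have hall := key_follow HinjR hQ.support_nodup hQnR hsubR h1R
    have hv' : W.getVert (W.length - Q.length) = v := by
      have := hall Q.length le_rfl
      rw [SimpleGraph.Walk.getVert_length, SimpleGraph.Walk.getVert_reverse] at this
      exact this.symm
    refine ⟨W.length - Q.length, ?_, by omega, hv', Or.inr (by omega)⟩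
    · -- 1 ≤ W.length - Q.length, i.e. Q.length < W.length
      rcases Nat.lt_or_ge Q.length W.length with h | h
      · omega
      · exfalso
        have hQW : Q.length = W.length := by omega
        rw [hQW, Nat.sub_self, SimpleGraph.Walk.getVert_zero] at hv'
        exact hne hv'

end CBadAux

namespace CBadAux

lemma end_mem_tail {p : G.Walk a a} (hp : p ≠ SimpleGraph.Walk.nil) : a ∈ p.support.tail := by
  cases p with
  | nil => exact absurd rfl hp
  | cons h q =>
    rw [SimpleGraph.Walk.support_cons, List.tail_cons]
    exact q.end_mem_support

open SimpleGraph.Walk in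
/-- Main structural lemma about distances along a cycle. -/
lemma cycleDist_facts [DecidableEq V] {w : V} (C : G.Walk w w) (hC : C.IsCycle)
    (hu : u ∈ C.support) (hv : v ∈ C.support) (hne : u ≠ v) :
    (∃ Pm : G.Walk u v, Pm.IsPath ∧ (∀ e ∈ Pm.edges, e ∈ C.edges) ∧
      Pm.length = cycleDist G C u v) ∧
    (∀ Q : G.Walk u v, Q.IsPath → (∀ e ∈ Q.edges, e ∈ C.edges) →
      Q.length + cycleDist G C u v ≤ C.length) := by
  set W := C.rotate u hu with hW
  have hWc : W.IsCycle := hC.rotate hu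
  have hrot : W.edges ~r C.edges := C.rotate_edges u hu
  have hemem : ∀ e, e ∈ W.edges ↔ e ∈ C.edges := fun e => hrot.mem_iff
  have hlenW : W.length = C.length := by
    have h1 : W.edges.length = C.edges.length := hrot.perm.length_eq
    rwa [length_edges, length_edges] at h1
  have hn3 : 3 ≤ W.length := hWc.three_le_length
  -- v in W.support
  have hwtail : w ∈ C.support.tail := end_mem_tail hC.ne_nil
  have hvtail : v ∈ C.support.tail := by
    rw [C.support_eq_cons] at hv
    rcases List.mem_cons.mp hv with rfl | h
    · exact hwtail
    · exact h
  have hvW : v ∈ W.support := by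
    have := (C.support_rotate u hu).mem_iff.mpr hvtail
    rw [W.support_eq_cons]
    exact List.mem_cons_of_mem _ this
  -- the two arcs
  set P1 := W.takeUntil v hvW with hP1
  set P2 := W.dropUntil v hvW with hP2
  have hspec : P1.append P2 = W := W.take_spec hvW
  have hsupp : P1.support ++ P2.support.tail = W.support := by
    rw [← support_append, hspec]
  have htail : P1.support.tail ++ P2.support.tail = W.support.tail := by
    have h1 := hsupp
    rw [P1.support_eq_cons, W.support_eq_cons, List.cons_append] at h1
    exact (List.cons.injEq _ _ _ _).mp h1 |>.2
  have hnd : (P1.support.tail ++ P2.support.tail).Nodup := by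
    rw [htail]; exact hWc.support_nodup
  rw [List.nodup_append] at hnd
  obtain ⟨hnd1, hnd2, hdisj⟩ := hnd
  have huP2 : u ∈ P2.support.tail := end_mem_tail_support_of_ne hne.symm P2
  have hvP1 : v ∈ P1.support.tail := end_mem_tail_support_of_ne hne P1
  have hP1path : P1.IsPath := by
    apply IsPath.mk'
    rw [P1.support_eq_cons, List.nodup_cons]
    exact ⟨fun hcon => hdisj _ hcon _ huP2 rfl, hnd1⟩
  have hP2path : P2.IsPath := by
    apply IsPath.mk'
    rw [P2.support_eq_cons, List.nodup_cons]
    exact ⟨fun hcon => hdisj _ hvP1 _ hcon rfl, hnd2⟩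
  have hlensum : P1.length + P2.length = W.length := by
    rw [← length_append, hspec]
  have hP1e : ∀ e ∈ P1.edges, e ∈ C.edges := fun e he =>
    (hemem e).mp (W.edges_takeUntil_subset hvW he)
  have hP2e : ∀ e ∈ P2.edges, e ∈ C.edges := fun e he =>
    (hemem e).mp (W.edges_dropUntil_subset hvW he)
  -- the distance set
  set S := {n | ∃ P : G.Walk u v, P.IsPath ∧ (∀ e ∈ P.edges, e ∈ C.edges) ∧ P.length = n}
    with hS
  have hmem1 : P1.length ∈ S := ⟨P1, hP1path, hP1e, rfl⟩
  have hmem2 : P2.length ∈ S := by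
    refine ⟨P2.reverse, hP2path.reverse, ?_, P2.length_reverse⟩
    intro e he
    rw [edges_reverse, List.mem_reverse] at he
    exact hP2e e he
  have hdval : cycleDist G C u v = sInf S := rfl
  have hdmem : cycleDist G C u v ∈ S := by
    rw [hdval]
    exact Nat.sInf_mem ⟨P1.length, hmem1⟩
  have hd1 : cycleDist G C u v ≤ P1.length := hdval ▸ Nat.sInf_le hmem1
  have hd2 : cycleDist G C u v ≤ P2.length := hdval ▸ Nat.sInf_le hmem2
  refine ⟨hdmem, ?_⟩
  intro Q hQ hQe
  have Hinj : ∀ i j : ℕ, 1 ≤ i → i ≤ W.length → 1 ≤ j → j ≤ W.length →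
      W.getVert i = W.getVert j → i = j := fun i j hi1 hi hj1 hj h =>
    cycle_getVert_inj hWc.support_nodup hi1 hi hj1 hj h
  have hQeW : ∀ e ∈ Q.edges, e ∈ W.edges := fun e he => (hemem e).mpr (hQe e he)
  have hP1eW : ∀ e ∈ P1.edges, e ∈ W.edges := fun e he => W.edges_takeUntil_subset hvW he
  obtain ⟨j, hj1, hjn, hjv, hjQ⟩ := classify Hinj hn3 hQ hne hQeW
  obtain ⟨j', hj1', hjn', hjv', hjP⟩ := classify Hinj hn3 hP1path hne hP1eW
  have hjj : j = j' := Hinj j j' hj1 (by omega) hj1' (by omega) (by rw [hjv, hjv'])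
  subst hjj
  omega

end CBadAux

end CBadAuxSec

/-- Statement (2) in the proof of Lemma 4.12: if `G` has no `C`-bad path and
`d_C(u,v) ≤ ‖C‖/4 − 1`, then `d_G(u,v) = d_C(u,v)`. -/
theorem stmt8 (G : SimpleGraph V) {w : V} (C : G.Walk w w)
    (hC : IsShortestEvenHole G C) (h24 : 24 ≤ C.length)
    (u v : V) (hu : u ∈ C.support) (hv : v ∈ C.support)
    (hd : 4 * cycleDist G C u v + 4 ≤ C.length)
    (hgood : ∀ (a b : V) (P : G.Walk a b), ¬ IsCBad G C P) :
    G.dist u v = cycleDist G C u v := by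
  classical
  obtain ⟨⟨hcyc, hlen4, hhole⟩, heven, hmin⟩ := hC
  by_cases huv : u = v
  · subst huv
    have h0 : cycleDist G C u u = 0 := by
      apply Nat.sInf_eq_zero.mpr
      left
      exact ⟨SimpleGraph.Walk.nil, SimpleGraph.Walk.IsPath.nil, by simp, rfl⟩
    rw [h0, SimpleGraph.dist_self]
  · obtain ⟨⟨Pm, hPm, hPme, hPml⟩, hbound⟩ :=
      CBadAux.cycleDist_facts C hcyc hu hv huv
    have hreach : G.Reachable u v := Pm.reachable
    have hdist_le : G.dist u v ≤ cycleDist G C u v := hPml ▸ SimpleGraph.dist_le Pm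
    rcases eq_or_lt_of_le hdist_le with he | hlt
    · exact he
    · exfalso
      obtain ⟨P, hP, hPlen⟩ := hreach.exists_path_of_dist
      have hPd : P.length < cycleDist G C u v := by omega
      have hP1 : 1 ≤ P.length := by
        rcases Nat.eq_zero_or_pos P.length with h0 | h1
        · exact absurd (P.eq_of_length_eq_zero h0) huv
        · exact h1
      have hAdj : ¬ G.Adj u v := by
        intro hadj
        have hedge : s(u, v) ∈ C.edges := hhole u v hu hv hadj
        have hmem1 : (1:ℕ) ∈ {n | ∃ P : G.Walk u v, P.IsPath ∧
            (∀ e ∈ P.edges, e ∈ C.edges) ∧ P.length = n} := by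
          refine ⟨SimpleGraph.Walk.cons hadj SimpleGraph.Walk.nil, ?_, ?_, rfl⟩
          · apply SimpleGraph.Walk.IsPath.mk'
            simp [huv]
          · intro e he
            simp only [SimpleGraph.Walk.edges_cons, SimpleGraph.Walk.edges_nil,
              List.mem_singleton] at he
            rw [he]; exact hedge
        have : cycleDist G C u v ≤ 1 := Nat.sInf_le hmem1
        omega
      have hP2 : 2 ≤ P.length := by
        rcases Nat.lt_or_ge P.length 2 with h | h
        · exfalso
          have hP1' : P.length = 1 := by omega
          have hadj : G.Adj (P.getVert 0) (P.getVert 1) :=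
            P.adj_getVert_succ (by omega)
          rw [SimpleGraph.Walk.getVert_zero] at hadj
          have : P.getVert 1 = v := by
            rw [← hP1']; exact P.getVert_length
          rw [this] at hadj
          exact hAdj hadj
        · exact h
      have hnotbad := hgood u v P
      rw [IsCBad] at hnotbad
      push_neg at hnotbad
      obtain ⟨Q, hQp, hQe, D, hD, hsupp⟩ :=
        hnotbad huv hAdj hu hv hP hP2 (le_of_lt hPd) (by omega)
      obtain ⟨hDhole, hDeven, hDmin⟩ := hD
      have hDlen : D.length = C.length :=
        le_antisymm (hDmin w C ⟨hcyc, hlen4, hhole⟩ heven) (hmin u D hDhole hDeven)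
      have hDcyc : D.IsCycle := hDhole.1
      have hfeq : D.support.toFinset = P.support.toFinset ∪ Q.support.toFinset := by
        ext z
        have := Set.ext_iff.mp hsupp z
        simp only [Set.mem_setOf_eq, Set.mem_union] at this
        simp [this]
      have hDcard : D.support.toFinset.card = D.length := by
        have hmemu : u ∈ D.support.tail := CBadAux.end_mem_tail hDcyc.ne_nil
        rw [D.support_eq_cons, List.toFinset_cons,
          Finset.insert_eq_self.mpr (List.mem_toFinset.mpr hmemu),
          List.toFinset_card_of_nodup hDcyc.support_nodup, List.length_tail,
          SimpleGraph.Walk.length_support]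
        omega
      have hPcard : P.support.toFinset.card = P.length + 1 := by
        rw [List.toFinset_card_of_nodup hP.support_nodup, SimpleGraph.Walk.length_support]
      have hQcard : Q.support.toFinset.card = Q.length + 1 := by
        rw [List.toFinset_card_of_nodup hQp.support_nodup, SimpleGraph.Walk.length_support]
      have hinter : ({u, v} : Finset V) ⊆ P.support.toFinset ∩ Q.support.toFinset := by
        intro z hz
        rcases Finset.mem_insert.mp hz with rfl | hz
        · simp only [Finset.mem_inter, List.mem_toFinset]
          exact ⟨P.start_mem_support, Q.start_mem_support⟩
        · rw [Finset.mem_singleton] at hz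
          subst hz
          simp only [Finset.mem_inter, List.mem_toFinset]
          exact ⟨P.end_mem_support, Q.end_mem_support⟩
      have h2i : 2 ≤ (P.support.toFinset ∩ Q.support.toFinset).card := by
        have hcard2 : ({u, v} : Finset V).card = 2 := by
          rw [Finset.card_insert_of_notMem (by simp [huv]), Finset.card_singleton]
        rw [← hcard2]
        exact Finset.card_le_card hinter
      have hcui := Finset.card_union_add_card_inter
        (P.support.toFinset) (Q.support.toFinset)
      have hQb := hbound Q hQp hQe
      rw [← hfeq] at hcui
      omega
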